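/- Every k-local word represents a (k+1)-representable graph; that is, if a word w is k-local, then there exists a (k+1)-uniform word w' over the same alphabet such that w and w' represent the same graph. -/

import Mathlib

open List

variable {α : Type*} [DecidableEq α]

/-- Two distinct letters `a` and `b` alternate in the word `w`:
their projection is an alternating sequence of `a`s and `b`s, both occurring. -/
def Alt (w : List α) (a b : α) : Prop :=
  a ≠ b ∧ a ∈ w ∧ b ∈ w ∧
    (w.filter (fun x => decide (x = a ∨ x = b))).Chain' (· ≠ ·)

/-- The word `w` represents the graph `G` with vertex set `V`:
the alphabet of `w` is `V` and adjacency coincides with alternation. -/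
def Represents (w : List α) (V : Finset α) (G : SimpleGraph α) : Prop :=
  w.toFinset = V ∧ ∀ a b : α, G.Adj a b ↔ Alt w a b

/-- A word is `k`-uniform if every letter of its alphabet occurs exactly `k` times. -/
def KUniform (k : ℕ) (w : List α) : Prop :=
  ∀ a ∈ w, w.count a = k

/-- Number of maximal blocks of `true`s in a boolean word. -/
def blockCount (l : List Bool) : ℕ :=
  ((l.zip (false :: l)).filter (fun p => p.1 && !p.2)).length

/-- `w` is `k`-local witnessed by the marking sequence `σ`. -/
def KLocalWith (k : ℕ) (w σ : List α) : Prop :=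
  σ.Nodup ∧ σ.toFinset = w.toFinset ∧
    ∀ i : ℕ, blockCount (w.map (fun x => decide (x ∈ σ.take i))) ≤ k

/-- `w` is `k`-local: some marking sequence witnesses `k`-locality. -/
def KLocal (k : ℕ) (w : List α) : Prop := ∃ σ : List α, KLocalWith k w σ

/-- The subgraph of `G` induced by `U` (as a graph on the same ambient type). -/
def inducedOn (G : SimpleGraph α) (U : Finset α) : SimpleGraph α where
  Adj a b := G.Adj a b ∧ a ∈ U ∧ b ∈ U
  symm := by
    constructor
    intro a b h
    exact ⟨h.1.symm, h.2.2, h.2.1⟩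
  loopless := by
    constructor
    intro a h
    exact G.loopless.irrefl a h.1

/-- Add a vertex `v` dominating the vertex set `V` to the graph `G`. -/
def addDom (G : SimpleGraph α) (V : Finset α) (v : α) : SimpleGraph α where
  Adj a b := G.Adj a b ∨ (a = v ∧ b ∈ V ∧ b ≠ v) ∨ (b = v ∧ a ∈ V ∧ a ≠ v)
  symm := by
    constructor
    intro a b h
    rcases h with h | h | h
    · exact Or.inl h.symm
    · exact Or.inr (Or.inr h)
    · exact Or.inr (Or.inl h)
  loopless := by
    constructor
    intro a h
    rcases h with h | h | h
    · exact G.loopless.irrefl a h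
    · exact h.2.2 h.1
    · exact h.2.2 h.1

/-- Threshold graphs (with explicit vertex set): built from the empty graph
by repeatedly adding isolated or dominating vertices. -/
inductive IsThreshold : SimpleGraph α → Finset α → Prop
  | empty : IsThreshold ⊥ ∅
  | isolated {G V v} (hv : v ∉ V) (h : IsThreshold G V) : IsThreshold G (insert v V)
  | dominating {G V v} (hv : v ∉ V) (h : IsThreshold G V) :
      IsThreshold (addDom G V v) (insert v V)

/-- Clique-width expressions over label type `L` and vertex type `α`. -/
inductive CWExpr (L α : Type*) where
  | vertex : L → α → CWExpr L α
  | union : CWExpr L α → CWExpr L α → CWExpr L α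
  | connect : L → L → CWExpr L α → CWExpr L α
  | relabel : L → L → CWExpr L α → CWExpr L α

/-- The graph of all edges between label `i` and label `j` within `V` under labelling `f`. -/
def connGraph {L : Type*} [DecidableEq L] (V : Finset α) (f : α → L) (i j : L) :
    SimpleGraph α where
  Adj a b := a ≠ b ∧ a ∈ V ∧ b ∈ V ∧ ((f a = i ∧ f b = j) ∨ (f a = j ∧ f b = i))
  symm := by
    constructor
    intro a b h
    rcases h.2.2.2 with h4 | h4
    · exact ⟨h.1.symm, h.2.2.1, h.2.1, Or.inr ⟨h4.2, h4.1⟩⟩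
    · exact ⟨h.1.symm, h.2.2.1, h.2.1, Or.inl ⟨h4.2, h4.1⟩⟩
  loopless := by
    constructor
    intro a h
    exact h.1 rfl

/-- `Builds e V f G`: the clique-width expression `e` builds the labelled graph
with vertex set `V`, labelling `f` and edge structure `G`. -/
inductive Builds {L : Type*} [DecidableEq L] : CWExpr L α → Finset α → (α → L) → SimpleGraph α → Prop
  | vertex (l : L) (v : α) : Builds (.vertex l v) {v} (fun _ => l) ⊥
  | union {e₁ e₂ V₁ V₂ f₁ f₂ G₁ G₂} (h₁ : Builds e₁ V₁ f₁ G₁) (h₂ : Builds e₂ V₂ f₂ G₂)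
      (hd : _root_.Disjoint V₁ V₂) :
      Builds (.union e₁ e₂) (V₁ ∪ V₂) (fun x => if x ∈ V₁ then f₁ x else f₂ x) (G₁ ⊔ G₂)
  | connect {e V f G} (i j : L) (hij : i ≠ j) (h : Builds e V f G) :
      Builds (.connect i j e) V f (G ⊔ connGraph V f i j)
  | relabel {e V f G} (i j : L) (h : Builds e V f G) :
      Builds (.relabel i j e) V (fun x => if f x = i then j else f x) G

/-- The clique-width of `G` (with vertex set `V`) is at most `k`. -/
def CliqueWidthLE (k : ℕ) (G : SimpleGraph α) (V : Finset α) : Prop :=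
  ∃ (e : CWExpr (Fin k) α) (f : α → Fin k), Builds e V f G

/-- The crown graph `H_{n,n}`: complete bipartite minus a perfect matching. -/
def crown (n : ℕ) : SimpleGraph (Fin n ⊕ Fin n) where
  Adj a b :=
    match a, b with
    | .inl x, .inr y => x ≠ y
    | .inr x, .inl y => x ≠ y
    | _, _ => False
  symm := by
    constructor
    intro a b h
    cases a <;> cases b <;> simp_all
    · exact fun hc => h hc.symm
    · exact fun hc => h hc.symm
  loopless := by
    constructor
    intro a h
    cases a <;> simp_all

/-- The disjoint-union-of-cliques graph associated with a partition `P` of `[n]`. -/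
def partGraph {n : ℕ} (P : Finpartition (Finset.univ : Finset (Fin n))) :
    SimpleGraph (Fin n) where
  Adj x y := x ≠ y ∧ ∃ C ∈ P.parts, x ∈ C ∧ y ∈ C
  symm := by
    constructor
    intro a b h
    obtain ⟨hne, C, hC, h1, h2⟩ := h
    exact ⟨hne.symm, C, hC, h2, h1⟩
  loopless := by
    constructor
    intro a h
    exact h.1 rfl

/-- The word associated with a partition: each block written twice in a row. -/
noncomputable def partWord {n : ℕ} (P : Finpartition (Finset.univ : Finset (Fin n))) : List (Fin n) :=
  (P.parts.toList.map (fun C => C.toList ++ C.toList)).flatten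



/-- recursive block counter -/
def bc : Bool → List Bool → ℕ
  | _, [] => 0
  | prev, b :: t => (if b && !prev then 1 else 0) + bc b t

lemma blockCount_eq_bc (l : List Bool) : blockCount l = bc false l := by
  suffices h : ∀ (l : List Bool) (prev : Bool),
      ((l.zip (prev :: l)).filter (fun p => p.1 && !p.2)).length = bc prev l by
    exact h l false
  intro l
  induction l with
  | nil => intro prev; simp [bc]
  | cons c t ih =>
    intro prev
    simp only [zip_cons_cons, filter_cons, bc, ← ih c]
    by_cases h : (c && !prev) = true <;> simp [h, Nat.add_comm]

lemma lemX (a b : α) (hab : a ≠ b) : ∀ (L : List α), (∀ z ∈ L, z = a ∨ z = b) →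
    L.Chain' (· ≠ ·) →
    L.count a ≤ L.count b + (if L.head? = some a then 1 else 0) := by
  intro L
  induction L with
  | nil => simp
  | cons c t ih =>
    intro hel hch
    have hct : ∀ z ∈ t, z = a ∨ z = b := fun z hz => hel z (mem_cons_of_mem _ hz)
    have iht := ih hct hch.tail
    have hhead : ∀ z, t.head? = some z → c ≠ z := by
      intro z hz
      exact (List.isChain_cons.mp hch).1 z hz
    rcases hel c (mem_cons_self) with rfl | rfl
    · -- c = a
      have hta : t.head? ≠ some c := fun hcontra => hhead c hcontra rfl
      have h1 : t.count c ≤ t.count b := by simpa [hta] using iht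
      rw [count_cons_self, count_cons_of_ne hab]
      simp only [head?_cons]
      simp only [if_true]
      omega
    · -- c = b
      have h1 : t.count a ≤ t.count c + 1 := by
        rcases h : t.head? with _ | z
        · simp [h] at iht; omega
        · rcases eq_or_ne z a with rfl | hza
          · simpa [h] using iht
          · rw [h] at iht
            simp only [Option.some.injEq, if_neg hza] at iht
            omega
      rw [count_cons_self, count_cons_of_ne (fun h => hab h.symm)]
      simp only [head?_cons, if_neg (fun h : some c = some a => hab (Option.some.injEq _ _ ▸ h : c = a).symm)]
      omega

lemma chain'_ne_reverse {L : List α} (h : L.Chain' (· ≠ ·)) :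
    L.reverse.Chain' (· ≠ ·) := by
  unfold List.Chain'; rw [List.isChain_reverse]
  exact h.imp (fun _ _ hne => fun he => hne he.symm)

lemma lemX' (a b : α) (hab : a ≠ b) (L : List α) (hel : ∀ z ∈ L, z = a ∨ z = b)
    (hch : L.Chain' (· ≠ ·)) :
    L.count a ≤ L.count b + (if L.getLast? = some a then 1 else 0) := by
  have := lemX a b hab L.reverse (fun z hz => hel z (by simpa using hz))
    (chain'_ne_reverse hch)
  simpa [List.head?_reverse] using this

def sl : Bool → Bool → ℕ
  | true, false => 1
  | _, _ => 0

lemma lemB (p q : α → Bool) (x y : α) (hpy : p y = true) (hpx : p x = false)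
    (hq : ∀ z, q z = true ↔ (z = x ∨ z = y)) :
    ∀ (w : List α) (prev afterY : Bool),
      (w.filter q).Chain' (· ≠ ·) →
      (afterY = true → (w.filter q).head? ≠ some y) →
      w.count y ≤ bc prev (w.map p) + sl prev afterY := by
  intro w
  induction w with
  | nil => simp [bc]
  | cons c t ih =>
    intro prev afterY hch hhd
    have hslle : ∀ u v : Bool, sl u v ≤ 1 := by decide
    by_cases hqc : q c = true
    · have hfil : (c :: t).filter q = c :: t.filter q := by rw [filter_cons, if_pos hqc]
      rw [hfil] at hch hhd
      rcases (hq c).mp hqc with rfl | rfl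
      · -- c = x
        have hih := ih false false hch.tail (by simp)
        have hcy : c ≠ y := by
          intro h; rw [h, hpy] at hpx; exact absurd hpx (by simp)
        rw [count_cons_of_ne hcy]
        simp only [map_cons, hpx, bc]
        have : bc false (t.map p) ≤ (if (false && !prev) = true then 1 else 0) + bc false (t.map p) + sl prev afterY := by
          split <;> simp [sl] <;> omega
        calc count y t ≤ bc false (t.map p) + sl false false := hih
        _ = bc false (t.map p) := by simp [sl]
        _ ≤ _ := this
      · -- c = y
        have hay : afterY = false := by
          rcases afterY with _ | _
          · rfl
          · exact (hhd rfl rfl).elim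
        subst hay
        have hih := ih true true hch.tail (by
          intro _ hcontra
          exact (List.isChain_cons.mp hch).1 c hcontra rfl)
        rw [count_cons_self]
        simp only [map_cons, hpy, bc]
        have h2 : sl true true = 0 := rfl
        rw [h2, Nat.add_zero] at hih
        rcases prev with _ | _ <;> simp [sl] <;> omega
    · -- q c = false : c ≠ x, c ≠ y
      have hcy : c ≠ y := fun h => by simp [hq, h] at hqc
      have hfil : (c :: t).filter q = t.filter q := by rw [filter_cons, if_neg (by simp [hqc])]
      rw [hfil] at hch hhd
      rw [count_cons_of_ne hcy]
      rcases hpc : p c with _ | _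
      · have hih := ih false false hch (by simp)
        simp only [map_cons, hpc, bc]
        have h2 : sl false false = 0 := rfl
        rw [h2, Nat.add_zero] at hih
        have := hslle prev afterY
        simp only [Bool.false_and, if_neg (by decide : ¬(false = true))]
        omega
      · have hih := ih true afterY hch hhd
        simp only [map_cons, hpc, bc]
        have h1 := hslle true afterY
        have h2 : sl false afterY = 0 := by rcases afterY with _|_ <;> rfl
        rcases prev with _ | _ <;> simp <;> omega


lemma mem_take_indexOf (l : List α) (a : α) (h : a ∈ l) :
    a ∈ l.take (l.idxOf a + 1) := by
  have hlt : l.idxOf a < l.length := List.idxOf_lt_length_iff.mpr h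
  have hmem : (l.take (l.idxOf a + 1))[l.idxOf a]'(by
      simpa [Nat.lt_min, hlt] using Nat.lt_succ_self _) ∈ l.take (l.idxOf a + 1) :=
    List.getElem_mem _
  rwa [List.getElem_take, List.getElem_idxOf] at hmem

lemma indexOf_lt_of_mem_take {l : List α} {a : α} {i : ℕ} (h : a ∈ l.take i) :
    l.idxOf a < i := by
  induction l generalizing i with
  | nil => simp at h
  | cons c t ih =>
    rcases i with _ | j
    · simp at h
    · rw [List.take_succ_cons] at h
      rcases eq_or_ne a c with rfl | hne
      · simp [List.idxOf_cons_self]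
      · have : a ∈ t.take j := by
          rcases List.mem_cons.mp h with h1 | h1
          · exact absurd h1 hne
          · exact h1
        rw [List.idxOf_cons_ne _ (fun h' => hne h'.symm)]
        exact Nat.succ_lt_succ (ih this)

lemma count_le_of_alt {k : ℕ} {w σ : List α} (hl : KLocalWith k w σ)
    {x y : α} (h : Alt w x y) : w.count x ≤ k + 1 := by
  obtain ⟨hnd, hfs, hblocks⟩ := hl
  obtain ⟨hxy, hxw, hyw, hch⟩ := h
  have hxσ : x ∈ σ := by
    rw [← List.mem_toFinset, hfs, List.mem_toFinset]; exact hxw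
  have hyσ : y ∈ σ := by
    rw [← List.mem_toFinset, hfs, List.mem_toFinset]; exact hyw
  -- the "marked earlier letter occurs at most k times" core
  have key : ∀ u v : α, u ≠ v → u ∈ σ → v ∈ σ →
      σ.idxOf u < σ.idxOf v →
      ((w.filter (fun z => decide (z = v ∨ z = u))).Chain' (· ≠ ·)) →
      w.count u ≤ k := by
    intro u v huv huσ hvσ hidx hch'
    set i := σ.idxOf u + 1 with hi
    have hpu : (decide (u ∈ σ.take i) : Bool) = true := by
      exact decide_eq_true (mem_take_indexOf σ u huσ)
    have hpv : (decide (v ∈ σ.take i) : Bool) = false := by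
      simp only [decide_eq_false_iff_not]
      intro hmem
      have := indexOf_lt_of_mem_take hmem
      omega
    have hb := lemB (fun z => decide (z ∈ σ.take i)) (fun z => decide (z = v ∨ z = u))
      v u hpu hpv (fun z => by simp) w false false hch' (by simp)
    have : bc false (w.map (fun z => decide (z ∈ σ.take i))) ≤ k := by
      rw [← blockCount_eq_bc]; exact hblocks i
    have hsl : sl false false = 0 := rfl
    omega
  have hidxne : σ.idxOf x ≠ σ.idxOf y := by
    intro he
    apply hxy
    have h1 : σ[σ.idxOf x]'(List.idxOf_lt_length_iff.mpr hxσ) = x := List.getElem_idxOf _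
    have h2 : σ[σ.idxOf y]'(List.idxOf_lt_length_iff.mpr hyσ) = y := List.getElem_idxOf _
    rw [← h1, ← h2]
    congr 1
  -- elements of the projection are x or y
  have hel : ∀ z ∈ w.filter (fun z => decide (z = x ∨ z = y)), z = x ∨ z = y := by
    intro z hz
    have := List.of_mem_filter hz
    simpa using this
  rcases Nat.lt_or_ge (σ.idxOf x) (σ.idxOf y) with hlt | hge
  · -- x is earlier: count x ≤ k
    have hch2 : (w.filter (fun z => decide (z = y ∨ z = x))).Chain' (· ≠ ·) := by
      have : (fun z => decide (z = y ∨ z = x)) = (fun z => decide (z = x ∨ z = y)) := by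
        funext z; simp [or_comm]
      rw [this]; exact hch
    exact Nat.le_trans (key x y hxy hxσ hyσ hlt hch2) (Nat.le_succ k)
  · have hlt : σ.idxOf y < σ.idxOf x := lt_of_le_of_ne hge (fun h' => hidxne h'.symm)
    have hcy : w.count y ≤ k := key y x (fun h' => hxy h'.symm) hyσ hxσ hlt hch
    -- count x ≤ count y + 1 by lemX on the projection
    have hx : w.count x ≤ w.count y + 1 := by
      have hXX := lemX x y hxy (w.filter (fun z => decide (z = x ∨ z = y))) hel hch
      have hcx : (w.filter (fun z => decide (z = x ∨ z = y))).count x = w.count x :=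
        List.count_filter (by simp)
      have hcy' : (w.filter (fun z => decide (z = x ∨ z = y))).count y = w.count y :=
        List.count_filter (by simp)
      rw [hcx, hcy'] at hXX
      exact Nat.le_trans hXX (by split <;> omega)
    omega

lemma one_le_k {k : ℕ} {w σ : List α} (hl : KLocalWith k w σ) (hw : w ≠ []) : 1 ≤ k := by
  obtain ⟨hnd, hfs, hblocks⟩ := hl
  have hb := hblocks σ.length
  rw [List.take_length] at hb
  have hall : w.map (fun x => decide (x ∈ σ)) = List.replicate w.length true := by
    rw [List.eq_replicate_iff]
    constructor
    · simp
    · intro b hb'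
      obtain ⟨z, hz, rfl⟩ := List.mem_map.mp hb'
      simp only [decide_eq_true_iff]
      rw [← List.mem_toFinset, hfs, List.mem_toFinset]
      exact hz
  rw [blockCount_eq_bc, hall] at hb
  rcases w with _ | ⟨c, t⟩
  · exact absurd rfl hw
  · simp only [List.length_cons, List.replicate_succ, bc] at hb
    simp at hb
    omega

lemma Alt_comm {w : List α} {a b : α} (h : Alt w a b) : Alt w b a := by
  obtain ⟨hne, ha, hb, hch⟩ := h
  refine ⟨hne.symm, hb, ha, ?_⟩
  have : (fun z => decide (z = b ∨ z = a)) = (fun z => decide (z = a ∨ z = b)) := by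
    funext z; simp [or_comm]
  rw [this]
  exact hch

lemma head_filter_indexOf {q : α → Bool} {a b : α} (hab : a ≠ b) (hqb : q b = true) :
    ∀ (l : List α), (l.filter q).head? = some a → b ∈ l → l.idxOf a < l.idxOf b := by
  intro l
  induction l with
  | nil => simp
  | cons c t ih =>
    intro hhd hbl
    by_cases hqc : q c = true
    · rw [List.filter_cons, if_pos hqc] at hhd
      simp only [List.head?_cons, Option.some.injEq] at hhd
      have hbc : c ≠ b := fun h => hab (hhd.symm.trans h)
      rw [← hhd, List.idxOf_cons_self, List.idxOf_cons_ne _ hbc]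
      exact Nat.succ_pos _
    · rw [List.filter_cons, if_neg (by simp [hqc])] at hhd
      have hca : c ≠ a := by
        intro h
        subst h
        have : c ∈ t.filter q := by
          rcases hf : t.filter q with _ | ⟨z, zs⟩
          · rw [hf] at hhd; simp at hhd
          · rw [hf] at hhd; simp at hhd; simp [hhd, hf]
        exact absurd (List.of_mem_filter this) (by simp [hqc])
      have hcb : c ≠ b := fun h => by rw [h, hqb] at hqc; exact hqc rfl
      have hbt : b ∈ t := by
        rcases List.mem_cons.mp hbl with h1 | h1
        · exact absurd h1.symm hcb
        · exact h1
      rw [List.idxOf_cons_ne _ hca, List.idxOf_cons_ne _ hcb]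
      exact Nat.succ_lt_succ (ih hhd hbt)

lemma filter_pair_comm (a b : α) (w : List α) :
    w.filter (fun z => decide (z = b ∨ z = a)) = w.filter (fun z => decide (z = a ∨ z = b)) := by
  apply List.filter_congr
  intro z _
  simp [or_comm]

lemma pump_step {k : ℕ} {u : List α} {a : α} (ha : a ∈ u) (hdefa : u.count a < k + 1)
    (hmin : ∀ b ∈ u, u.count b < k + 1 → u.count a ≤ u.count b)
    (hmax : ∀ b ∈ u, b ≠ a → u.count b = u.count a → u.reverse.idxOf b ≤ u.reverse.idxOf a) :
    ∀ x y, Alt u x y ↔ Alt (u ++ [a]) x y := by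
  have main : ∀ b, b ≠ a → (Alt u a b ↔ Alt (u ++ [a]) a b) := by
    intro b hba
    have hab : a ≠ b := fun h => hba h.symm
    set q : α → Bool := fun z => decide (z = a ∨ z = b) with hqdef
    have hqa : q a = true := by simp [hqdef]
    have hqb : q b = true := by simp [hqdef]
    have hfil : (u ++ [a]).filter q = u.filter q ++ [a] := by
      rw [List.filter_append]
      simp [hqa]
    constructor
    · rintro ⟨hne, hau, hbu, hch⟩
      refine ⟨hne, by simp, by simp [hbu], ?_⟩
      rw [hfil]
      unfold List.Chain'; rw [List.isChain_append]
      refine ⟨hch, List.isChain_singleton _, ?_⟩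
      intro z hz a' ha'
      have ha2 : a' = a := by simpa [eq_comm] using ha'
      subst ha2
      intro hza
      subst hza
      have hgl : (u.filter q).getLast? = some z := Option.mem_def.mp hz
      have hel : ∀ w ∈ u.filter q, w = z ∨ w = b := by
        intro w hw
        have := List.of_mem_filter hw
        simpa [hqdef] using this
      have hchP : (u.filter q).Chain' (· ≠ ·) := by
        simpa [hqdef] using hch
      have hX := lemX' b z hba (u.filter q)
        (fun w hw => ((hel w hw).elim Or.inr Or.inl)) hchP
      rw [hgl] at hX
      rw [if_neg (by simp only [Option.some.injEq]; exact hab : ¬ (some z = some b))] at hX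
      have hcb : (u.filter q).count b = u.count b := List.count_filter hqb
      have hca : (u.filter q).count z = u.count z := List.count_filter hqa
      rw [hcb, hca, Nat.add_zero] at hX
      rcases Nat.lt_or_ge (u.count b) (u.count z) with hlt | hge
      · have := hmin b hbu (by omega)
        omega
      · have heq : u.count b = u.count z := Nat.le_antisymm hX hge
        have h1 := hmax b hbu hba heq
        have hhd : (u.reverse.filter q).head? = some z := by
          rw [List.filter_reverse, List.head?_reverse]
          exact hgl
        have h2 := head_filter_indexOf hab hqb u.reverse hhd (List.mem_reverse.mpr hbu)
        omega
    · rintro ⟨hne, hau, hbu, hch⟩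
      have hbu' : b ∈ u := by
        rcases List.mem_append.mp hbu with h1 | h1
        · exact h1
        · simp at h1; exact absurd h1 hba
      refine ⟨hne, ha, hbu', ?_⟩
      rw [hfil] at hch; unfold List.Chain' at hch; rw [List.isChain_append] at hch
      exact hch.1
  intro x y
  rcases eq_or_ne x a with rfl | hxa
  · rcases eq_or_ne y x with rfl | hyx
    · constructor <;> (rintro ⟨hne, _⟩; exact absurd rfl hne)
    · exact main y (fun h => hyx h)
  · rcases eq_or_ne y a with rfl | hya
    · constructor
      · intro h
        exact Alt_comm ((main x hxa).mp (Alt_comm h))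
      · intro h
        exact Alt_comm ((main x hxa).mpr (Alt_comm h))
    · -- neither is a : projections unchanged
      have hq : (fun z => decide (z = x ∨ z = y)) a = false := by
        simp only [decide_eq_false_iff_not, not_or]
        exact ⟨fun h => hxa h.symm, fun h => hya h.symm⟩
      have hfil : (u ++ [a]).filter (fun z => decide (z = x ∨ z = y)) =
          u.filter (fun z => decide (z = x ∨ z = y)) := by
        rw [List.filter_append]
        simp only [List.filter_cons, hq]
        simp
      constructor
      · rintro ⟨hne, hxu, hyu, hch⟩
        exact ⟨hne, by simp [hxu], by simp [hyu], by rw [hfil]; exact hch⟩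
      · rintro ⟨hne, hxu, hyu, hch⟩
        refine ⟨hne, ?_, ?_, by rw [hfil] at hch; exact hch⟩
        · rcases List.mem_append.mp hxu with h1 | h1
          · exact h1
          · simp at h1; exact absurd h1 hxa
        · rcases List.mem_append.mp hyu with h1 | h1
          · exact h1
          · simp at h1; exact absurd h1 hya

lemma exists_pump_letter {k : ℕ} {u : List α} (hne : ∃ a ∈ u, u.count a < k + 1) :
    ∃ a, a ∈ u ∧ u.count a < k + 1 ∧
      (∀ b ∈ u, u.count b < k + 1 → u.count a ≤ u.count b) ∧
      (∀ b ∈ u, b ≠ a → u.count b = u.count a → u.reverse.idxOf b ≤ u.reverse.idxOf a) := by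
  classical
  obtain ⟨a0, ha0u, ha0c⟩ := hne
  set D : Finset α := u.toFinset.filter (fun a => u.count a < k + 1) with hD
  have hDne : D.Nonempty := ⟨a0, by simp [hD, ha0u]; omega⟩
  obtain ⟨am, hamD, hammin⟩ := D.exists_min_image (fun a => u.count a) hDne
  set C : Finset α := D.filter (fun a => u.count a = u.count am) with hC
  have hCne : C.Nonempty := ⟨am, by simp [hC, hamD]⟩
  obtain ⟨a, haC, hamax⟩ := C.exists_max_image (fun b => u.reverse.idxOf b) hCne
  have haD : a ∈ D := (Finset.mem_filter.mp haC).1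
  have hacnt : u.count a = u.count am := (Finset.mem_filter.mp haC).2
  have hau : a ∈ u := by
    have := (Finset.mem_filter.mp haD).1
    simpa using this
  have haclt : u.count a < k + 1 := (Finset.mem_filter.mp haD).2
  refine ⟨a, hau, haclt, ?_, ?_⟩
  · intro b hbu hbc
    have hbD : b ∈ D := by simp [hD, hbu]; omega
    rw [hacnt]
    exact hammin b hbD
  · intro b hbu hba hbc
    have hbC : b ∈ C := by
      simp only [hC, hD, Finset.mem_filter, List.mem_toFinset]
      exact ⟨⟨hbu, by omega⟩, by omega⟩
    exact hamax b hbC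

lemma list_length_eq_sum_count (u : List α) : ∑ a ∈ u.toFinset, u.count a = u.length := by
  have := Multiset.toFinset_sum_count_eq (u : Multiset α)
  simpa using this

lemma pump {k : ℕ} : ∀ (n : ℕ) (u : List α), ((k+1) * u.toFinset.card - u.length ≤ n) →
    (∀ a ∈ u, u.count a ≤ k + 1) →
    ∃ u', u'.toFinset = u.toFinset ∧ KUniform (k+1) u' ∧ ∀ a b : α, (Alt u a b ↔ Alt u' a b) := by
  intro n
  induction n with
  | zero =>
    intro u hmeas hcnt
    by_cases hfull : ∀ a ∈ u, u.count a = k + 1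
    · exact ⟨u, rfl, hfull, fun a b => Iff.rfl⟩
    · exfalso
      push_neg at hfull
      obtain ⟨a0, ha0u, ha0ne⟩ := hfull
      have hlt : u.length < (k+1) * u.toFinset.card := by
        rw [← list_length_eq_sum_count]
        have : (k+1) * u.toFinset.card = ∑ _a ∈ u.toFinset, (k+1) := by
          rw [Finset.sum_const, smul_eq_mul, Nat.mul_comm]
        rw [this]
        apply Finset.sum_lt_sum
        · intro i hi
          exact hcnt i (by simpa using hi)
        · exact ⟨a0, by simpa using ha0u, lt_of_le_of_ne (hcnt a0 ha0u) ha0ne⟩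
      omega
  | succ n ih =>
    intro u hmeas hcnt
    by_cases hfull : ∀ a ∈ u, u.count a = k + 1
    · exact ⟨u, rfl, hfull, fun a b => Iff.rfl⟩
    · push_neg at hfull
      obtain ⟨a0, ha0u, ha0ne⟩ := hfull
      obtain ⟨a, hau, hac, hmin, hmax⟩ := exists_pump_letter
        ⟨a0, ha0u, lt_of_le_of_ne (hcnt a0 ha0u) ha0ne⟩
      have hstep := pump_step hau hac hmin hmax
      set u1 := u ++ [a] with hu1
      have hfs : u1.toFinset = u.toFinset := by
        simp only [hu1, List.toFinset_append, List.toFinset_cons, List.toFinset_nil]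
        rw [Finset.union_eq_left]
        simpa using hau
      have hmem : ∀ b, b ∈ u1 ↔ b ∈ u := by
        intro b
        simp only [hu1, List.mem_append, List.mem_singleton]
        constructor
        · rintro (h | rfl)
          · exact h
          · exact hau
        · exact Or.inl
      have hcnt1 : ∀ b ∈ u1, u1.count b ≤ k + 1 := by
        intro b hb
        rcases eq_or_ne b a with rfl | hba
        · simp only [hu1, List.count_append, List.count_singleton]
          simp
          omega
        · simp only [hu1, List.count_append]
          rw [List.count_singleton]
          rw [if_neg (by simpa using fun h : a = b => hba h.symm)]
          have := hcnt b ((hmem b).mp hb)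
          omega
      have hlt : u.length < (k+1) * u.toFinset.card := by
        rw [← list_length_eq_sum_count]
        have h2 : (k+1) * u.toFinset.card = ∑ _a ∈ u.toFinset, (k+1) := by
          rw [Finset.sum_const, smul_eq_mul, Nat.mul_comm]
        rw [h2]
        apply Finset.sum_lt_sum
        · intro i hi
          exact hcnt i (by simpa using hi)
        · exact ⟨a, by simpa using hau, hac⟩
      have hmeas1 : (k+1) * u1.toFinset.card - u1.length ≤ n := by
        rw [hfs]
        have : u1.length = u.length + 1 := by simp [hu1]
        omega
      obtain ⟨u', hfs', huni', halt'⟩ := ih u1 hmeas1 hcnt1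
      exact ⟨u', by rw [hfs', hfs], huni',
        fun x y => Iff.trans (hstep x y) (halt' x y)⟩

lemma count_flatMap_pair (z : α) : ∀ l : List α,
    (l.flatMap (fun v => [v, v])).count z = 2 * l.count z := by
  intro l
  induction l with
  | nil => simp
  | cons c t ih =>
    rw [List.flatMap_cons, List.count_append, ih, List.count_cons]
    rcases eq_or_ne c z with rfl | hne
    · simp [List.count_cons]
      omega
    · simp [List.count_cons, hne, Ne.symm hne]

lemma normalize_iso {k : ℕ} {w σ : List α} (hl : KLocalWith k w σ) (hk : 1 ≤ k) :
    ∃ u : List α, u.toFinset = w.toFinset ∧ (∀ a ∈ u, u.count a ≤ k + 1) ∧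
      ∀ a b : α, Alt w a b ↔ Alt u a b := by
  classical
  set P : α → Prop := fun x => ∃ y, Alt w x y with hP
  set pb : α → Bool := fun x => decide (P x) with hpb
  set iso : Finset α := w.toFinset.filter (fun x => ¬ P x) with hiso
  set flat : List α := iso.toList.flatMap (fun v => [v, v]) with hflat
  set u : List α := w.filter pb ++ flat with hu
  have hmemflat : ∀ z, z ∈ flat ↔ z ∈ iso := by
    intro z
    simp only [hflat, List.mem_flatMap, Finset.mem_toList]
    constructor
    · rintro ⟨v, hv, hz⟩
      simp only [List.mem_cons, List.mem_singleton, List.not_mem_nil, or_false] at hz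
      rcases hz with rfl | rfl <;> exact hv
    · intro hz
      exact ⟨z, hz, by simp⟩
  have hmem : ∀ x, x ∈ u ↔ x ∈ w := by
    intro x
    simp only [hu, List.mem_append]
    constructor
    · rintro (h | h)
      · exact List.mem_of_mem_filter h
      · have := (hmemflat x).mp h
        rw [hiso] at this
        simpa using (Finset.mem_filter.mp this).1
    · intro hx
      by_cases hPx : P x
      · left
        exact List.mem_filter.mpr ⟨hx, by simp [hpb, hPx]⟩
      · right
        rw [hmemflat, hiso]
        simp [hx, hPx]
  -- isolated letters break in u
  have hbreak : ∀ a, a ∈ iso → ∀ b, ¬ Alt u a b := by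
    intro a haiso b halt
    obtain ⟨hne, hau, hbu, hch⟩ := halt
    obtain ⟨l1, l2, hsplit⟩ := List.append_of_mem (Finset.mem_toList.mpr haiso)
    have hflatdec : flat = l1.flatMap (fun v => [v, v]) ++ ([a, a] ++ l2.flatMap (fun v => [v, v])) := by
      rw [hflat, hsplit, List.flatMap_append, List.flatMap_cons]
    set q : α → Bool := fun z => decide (z = a ∨ z = b) with hq
    have hinf : [a, a] <:+: u.filter q := by
      rw [hu, List.filter_append, hflatdec, List.filter_append, List.filter_append]
      have h2 : [a, a].filter q = [a, a] := by simp [hq]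
      rw [h2]
      exact ⟨(w.filter pb).filter q ++ (l1.flatMap (fun v => [v, v])).filter q,
        (l2.flatMap (fun v => [v, v])).filter q, by simp⟩
    have := hch.infix hinf
    rw [List.isChain_cons_cons] at this
    exact this.1 rfl
  have hisoiff : ∀ a, a ∈ w.toFinset → (a ∈ iso ↔ ¬ P a) := by
    intro a ha
    rw [hiso]
    simp [ha]
  -- main iff
  refine ⟨u, ?_, ?_, ?_⟩
  · ext x
    simp only [List.mem_toFinset]
    exact hmem x
  · intro a hau
    have haw : a ∈ w := (hmem a).mp hau
    by_cases hPa : P a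
    · -- count a u = count a w ≤ k+1
      have h1 : (w.filter pb).count a = w.count a := List.count_filter (by simp [hpb, hPa])
      have h2 : flat.count a = 0 := by
        rw [hflat, count_flatMap_pair]
        have : iso.toList.count a = 0 := List.count_eq_zero_of_not_mem (by
          rw [Finset.mem_toList, hiso]
          simp [hPa])
        omega
      rw [hu, List.count_append, h1, h2, Nat.add_zero]
      obtain ⟨y, hy⟩ := hPa
      exact count_le_of_alt hl hy
    · have h1 : (w.filter pb).count a = 0 := List.count_eq_zero_of_not_mem (by
        intro hmem'
        have := List.mem_filter.mp hmem'
        simp [hpb, hPa] at this)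
      have h2 : flat.count a = 2 := by
        rw [hflat, count_flatMap_pair,
          List.count_eq_one_of_mem iso.nodup_toList (by
            rw [Finset.mem_toList, hiso]; simp [haw, hPa])]
      rw [hu, List.count_append, h1, h2]
      omega
  · intro a b
    by_cases hPa : P a
    · by_cases hPb : P b
      · -- both non-isolated: projections coincide
        rcases eq_or_ne a b with rfl | hne
        · constructor <;> (rintro ⟨hne', _⟩; exact absurd rfl hne')
        set q : α → Bool := fun z => decide (z = a ∨ z = b) with hq
        have hfq : flat.filter q = [] := by
          rw [List.filter_eq_nil_iff]
          intro z hz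
          have hziso := (hmemflat z).mp hz
          have hzP : ¬ P z := by
            rw [hiso] at hziso
            exact (Finset.mem_filter.mp hziso).2
          simp only [hq, decide_eq_true_iff, not_or]
          exact ⟨fun h => hzP (by rw [h]; exact hPa), fun h => hzP (by rw [h]; exact hPb)⟩
        have hfil : u.filter q = w.filter q := by
          rw [hu, List.filter_append, hfq, List.append_nil, List.filter_filter]
          apply List.filter_congr
          intro z _
          by_cases hqz : q z = true
          · have : pb z = true := by
              rcases (by simpa [hq] using hqz : z = a ∨ z = b) with rfl | rfl
              · simp [hpb, hPa]
              · simp [hpb, hPb]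
            simp [this, hqz]
          · simp only [Bool.and_eq_true, hqz]
            simp only [Bool.not_eq_true] at hqz
            simp [hqz]
        constructor
        · rintro ⟨hne', haw, hbw, hch⟩
          exact ⟨hne', (hmem a).mpr haw, (hmem b).mpr hbw, by rw [hfil]; exact hch⟩
        · rintro ⟨hne', hau, hbu, hch⟩
          exact ⟨hne', (hmem a).mp hau, (hmem b).mp hbu, by rw [← hfil]; exact hch⟩
      · -- b isolated: both sides false
        constructor
        · intro h
          exact absurd ⟨a, Alt_comm h⟩ hPb
        · intro h
          have hbw : b ∈ w := (hmem b).mp h.2.2.1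
          exact absurd (Alt_comm h) (hbreak b (by rw [hiso]; simp [hbw, hPb]) a)
    · constructor
      · intro h
        exact absurd ⟨b, h⟩ hPa
      · intro h
        have haw : a ∈ w := (hmem a).mp h.2.1
        exact absurd h (hbreak a (by rw [hiso]; simp [haw, hPa]) b)

/-- Every `k`-local word represents a `(k+1)`-representable graph:
there is a `(k+1)`-uniform word over the same alphabet representing the same graph. -/
theorem stmt0 {α : Type*} [DecidableEq α] (k : ℕ) (w : List α) (h : KLocal k w) :
    ∃ w' : List α, w'.toFinset = w.toFinset ∧ KUniform (k + 1) w' ∧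
      ∀ a b : α, Alt w a b ↔ Alt w' a b := by
  obtain ⟨σ, hσ⟩ := h
  rcases eq_or_ne w [] with rfl | hw
  · refine ⟨[], rfl, ?_, ?_⟩
    · intro a ha
      simp at ha
    · intro a b
      constructor
      · rintro ⟨_, h1, _⟩
        simp at h1
      · rintro ⟨_, h1, _⟩
        simp at h1
  · have hk := one_le_k hσ hw
    obtain ⟨u, hufs, hucnt, hualt⟩ := normalize_iso hσ hk
    obtain ⟨u', hfs', huni', halt'⟩ := pump ((k+1) * u.toFinset.card - u.length) u le_rfl hucnt
    exact ⟨u', by rw [hfs', hufs], huni', fun a b => (hualt a b).trans (halt' a b)⟩
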